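/- arXiv:1311.0927 — 2 statements merged into one kernel-verified Lean document; each statement's English description precedes it below -/
import Mathlib

section
/- Let B₁ ⊂ ℝ^{k₁} and B₂ ⊂ ℝ^{k₂} be the unit balls of norms p₁ and p₂ respectively, and let B ⊂ ℝ^{k₁+k₂} be the unit ball of the norm p(x,y) = p₁(x) + p₂(y). Then (k₁+k₂)! · vol(B) = k₁! · vol(B₁) · k₂! · vol(B₂). -/
open MeasureTheory ENNReal Module

theorem aux_norm_ball {E : Type*} [AddCommGroup E] [Module ℝ E] [FiniteDimensional ℝ E]
    [MeasurableSpace E] [TopologicalSpace E] [IsTopologicalAddGroup E] [BorelSpace E] [T2Space E]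
    [ContinuousSMul ℝ E] (μ : Measure E) [Measure.IsAddHaarMeasure μ] (g : E → ℝ)
    (h_smul : ∀ (c : ℝ) x, g (c • x) = |c| * g x)
    (h_add : ∀ x y, g (x + y) ≤ g x + g y)
    (h_def : ∀ x, g x = 0 → x = 0) :
    (Nat.factorial (finrank ℝ E) : ℝ≥0∞) * μ {x | g x ≤ 1} =
      ENNReal.ofReal (∫ x, Real.exp (-(g x)) ∂μ) := by
  have h1 : g 0 = 0 := by
    have := h_smul 0 0
    simpa using this
  have h2 : ∀ x, g (-x) = g x := fun x => by
    have := h_smul (-1) x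
    simpa using this
  have h5 : ∀ (r : ℝ) x, g (r • x) ≤ |r| * g x := fun r x => (h_smul r x).le
  have hnonneg : ∀ x, 0 ≤ g x := fun x => by
    have h := h_add x (-x)
    rw [add_neg_cancel, h1, h2] at h
    linarith
  obtain hE | hE := subsingleton_or_nontrivial E
  · haveI : Unique E := ⟨⟨0⟩, fun a => Subsingleton.elim a 0⟩
    have hset : {x : E | g x ≤ 1} = Set.univ := by
      ext x
      simp [Subsingleton.elim x 0, h1]
    have hfr : finrank ℝ E = 0 := finrank_zero_of_subsingleton
    rw [hset, hfr, Nat.factorial_zero, Nat.cast_one, one_mul]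
    rw [MeasureTheory.integral_unique]
    have hd : (default : E) = 0 := Subsingleton.elim _ _
    rw [hd, h1]
    simp only [neg_zero, Real.exp_zero, smul_eq_mul, mul_one]
    rw [measureReal_def, ENNReal.ofReal_toReal]
    exact (IsCompact.measure_lt_top isCompact_univ).ne
  · rw [MeasureTheory.measure_le_eq_lt μ h1 h2 h_add (fun {x} h => h_def x h) h5 1,
      MeasureTheory.measure_lt_one_eq_integral_div_gamma μ h1 h2 h_add (fun {x} h => h_def x h) h5
        one_pos]
    have hΓ : Real.Gamma ((finrank ℝ E : ℝ) / 1 + 1) = (Nat.factorial (finrank ℝ E) : ℝ) := by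
      rw [div_one]
      exact_mod_cast Real.Gamma_nat_eq_factorial _
    simp_rw [Real.rpow_one, hΓ]
    rw [show ((Nat.factorial (finrank ℝ E) : ℝ≥0∞)) =
        ENNReal.ofReal ((Nat.factorial (finrank ℝ E) : ℝ)) by simp,
      ← ENNReal.ofReal_mul (by positivity),
      mul_div_cancel₀ _ (by positivity)]

theorem volume_l1_sum_of_norms (k₁ k₂ : ℕ)
    (p₁ : EuclideanSpace ℝ (Fin k₁) → ℝ) (p₂ : EuclideanSpace ℝ (Fin k₂) → ℝ)
    (hp₁_smul : ∀ (c : ℝ) x, p₁ (c • x) = |c| * p₁ x)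
    (hp₁_add : ∀ x y, p₁ (x + y) ≤ p₁ x + p₁ y)
    (hp₁_def : ∀ x, p₁ x = 0 → x = 0)
    (hp₂_smul : ∀ (c : ℝ) x, p₂ (c • x) = |c| * p₂ x)
    (hp₂_add : ∀ x y, p₂ (x + y) ≤ p₂ x + p₂ y)
    (hp₂_def : ∀ x, p₂ x = 0 → x = 0) :
    ((Nat.factorial (k₁ + k₂) : ℝ≥0∞)) *
        volume {z : EuclideanSpace ℝ (Fin k₁) × EuclideanSpace ℝ (Fin k₂) |
          p₁ z.1 + p₂ z.2 ≤ 1}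
      = ((Nat.factorial k₁ : ℝ≥0∞) * volume {x | p₁ x ≤ 1}) *
          ((Nat.factorial k₂ : ℝ≥0∞) * volume {y | p₂ y ≤ 1}) := by
  have hp₁0 : ∀ x, 0 ≤ p₁ x := fun x => by
    have h := hp₁_add x (-x)
    have h2 : p₁ (-x) = p₁ x := by simpa using hp₁_smul (-1) x
    have h1 : p₁ 0 = 0 := by simpa using hp₁_smul 0 0
    rw [add_neg_cancel, h1, h2] at h; linarith
  have hp₂0 : ∀ y, 0 ≤ p₂ y := fun y => by
    have h := hp₂_add y (-y)
    have h2 : p₂ (-y) = p₂ y := by simpa using hp₂_smul (-1) y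
    have h1 : p₂ 0 = 0 := by simpa using hp₂_smul 0 0
    rw [add_neg_cancel, h1, h2] at h; linarith
  have hfr : finrank ℝ (EuclideanSpace ℝ (Fin k₁) × EuclideanSpace ℝ (Fin k₂)) = k₁ + k₂ := by
    simp [Module.finrank_prod]
  haveI : (volume : Measure (EuclideanSpace ℝ (Fin k₁) ×
      EuclideanSpace ℝ (Fin k₂))).IsAddHaarMeasure := by
    rw [MeasureTheory.Measure.volume_eq_prod]
    exact MeasureTheory.Measure.prod.instIsAddHaarMeasure volume volume
  have hmain := aux_norm_ball (volume : Measure (EuclideanSpace ℝ (Fin k₁) ×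
      EuclideanSpace ℝ (Fin k₂))) (fun z => p₁ z.1 + p₂ z.2)
    (fun c z => by simp only [Prod.smul_fst, Prod.smul_snd, hp₁_smul, hp₂_smul]; ring)
    (fun z w => by
      have := add_le_add (hp₁_add z.1 w.1) (hp₂_add z.2 w.2)
      simpa [add_add_add_comm] using this)
    (fun z h => by
      have h' : p₁ z.1 + p₂ z.2 = 0 := h
      have h1 : p₁ z.1 = 0 := le_antisymm (by linarith [hp₂0 z.2]) (hp₁0 z.1)
      have h2 : p₂ z.2 = 0 := by linarith
      exact Prod.ext (hp₁_def _ h1) (hp₂_def _ h2))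
  rw [hfr] at hmain
  have h1 := aux_norm_ball (volume : Measure (EuclideanSpace ℝ (Fin k₁))) p₁
    hp₁_smul hp₁_add hp₁_def
  have h2 := aux_norm_ball (volume : Measure (EuclideanSpace ℝ (Fin k₂))) p₂
    hp₂_smul hp₂_add hp₂_def
  rw [finrank_euclideanSpace_fin] at h1 h2
  rw [hmain, h1, h2, ← ENNReal.ofReal_mul (integral_nonneg fun x => (Real.exp_pos _).le)]
  congr 1
  rw [MeasureTheory.Measure.volume_eq_prod]
  rw [show (fun z : EuclideanSpace ℝ (Fin k₁) × EuclideanSpace ℝ (Fin k₂) =>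
      Real.exp (-(p₁ z.1 + p₂ z.2))) = fun z => Real.exp (-(p₁ z.1)) * Real.exp (-(p₂ z.2)) by
    funext z; rw [← Real.exp_add]; ring_nf]
  exact MeasureTheory.integral_prod_mul (fun x => Real.exp (-p₁ x)) (fun y => Real.exp (-p₂ y))
end

section
/- With q and η̂ as above (q(x) = max(max_i |x_i|, |η̂·x|), η̂ = (−c_n/c₁,…,−c_n/c_{n-1}), 0 < c_n ≤ c_i), the dual norm satisfies q*(η̂) = min(1, Σ_{i=1}^{n-1} c_n/c_i). -/
open scoped RealInnerProductSpace

/-- The dual norm of `p`: `p*(v) = sup {|⟪v,x⟫| : p x ≤ 1}`. -/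
noncomputable def dualNorm {m : ℕ} (p : EuclideanSpace ℝ (Fin m) → ℝ)
    (v : EuclideanSpace ℝ (Fin m)) : ℝ :=
  sSup {r : ℝ | ∃ x, p x ≤ 1 ∧ r = |⟪v, x⟫|}

theorem dual_norm_of_eta (m : ℕ) (hm : 0 < m)
    (c : Fin m → ℝ) (cn : ℝ) (hcn : 0 < cn) (hc : ∀ i, cn ≤ c i)
    (η : EuclideanSpace ℝ (Fin m)) (hη : ∀ i, η i = -cn / c i)
    (q : EuclideanSpace ℝ (Fin m) → ℝ)
    (hq : ∀ x, q x = max (⨆ i : Fin m, |x i|) |⟪η, x⟫|) :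
    dualNorm q η = min 1 (∑ i, cn / c i) := by
  haveI : Nonempty (Fin m) := ⟨⟨0, hm⟩⟩
  set S := ∑ i, cn / c i with hS
  have hci : ∀ i, 0 < c i := fun i => lt_of_lt_of_le hcn (hc i)
  have hterm : ∀ i, 0 < cn / c i := fun i => div_pos hcn (hci i)
  have hSpos : 0 < S := Finset.sum_pos (fun i _ => hterm i) ⟨⟨0, hm⟩, Finset.mem_univ _⟩
  have hinner : ∀ x : EuclideanSpace ℝ (Fin m), ⟪η, x⟫ = ∑ i, η i * x i := by
    intro x
    simp [PiLp.inner_apply, mul_comm]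
  -- upper bound
  have hub : ∀ r ∈ {r : ℝ | ∃ x, q x ≤ 1 ∧ r = |⟪η, x⟫|}, r ≤ min 1 S := by
    rintro r ⟨x, hx, rfl⟩
    rw [hq] at hx
    have h1 : |⟪η, x⟫| ≤ 1 := le_trans (le_max_right _ _) hx
    have hxi : ∀ i, |x i| ≤ 1 := by
      intro i
      exact le_trans (le_ciSup (f := fun i => |x i|) (Set.Finite.bddAbove (Set.finite_range _)) i)
        (le_trans (le_max_left _ _) hx)
    have h2 : |⟪η, x⟫| ≤ S := by
      rw [hinner]
      calc |∑ i, η i * x i| ≤ ∑ i, |η i * x i| := Finset.abs_sum_le_sum_abs _ _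
        _ ≤ ∑ i, cn / c i := by
            apply Finset.sum_le_sum
            intro i _
            rw [abs_mul, hη i, abs_div, abs_neg, abs_of_pos hcn, abs_of_pos (hci i)]
            calc cn / c i * |x i| ≤ cn / c i * 1 :=
              mul_le_mul_of_nonneg_left (hxi i) (le_of_lt (hterm i))
              _ = cn / c i := mul_one _
    exact le_min h1 h2
  -- witness
  set t := min 1 S / S with ht
  have htpos : 0 < t := div_pos (lt_min one_pos hSpos) hSpos
  have ht1 : t ≤ 1 := (div_le_one hSpos).2 (min_le_right _ _)
  set x : EuclideanSpace ℝ (Fin m) := WithLp.toLp 2 (fun _ => -t) with hx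
  have hxinner : ⟪η, x⟫ = min 1 S := by
    rw [hinner]
    have : ∀ i, η i * x i = t * (cn / c i) := by
      intro i
      simp only [hx, hη]
      ring
    rw [Finset.sum_congr rfl (fun i _ => this i), ← Finset.mul_sum, ← hS, ht,
      div_mul_cancel₀ _ (ne_of_gt hSpos)]
  have hqx : q x ≤ 1 := by
    rw [hq]
    apply max_le
    · have : (⨆ i : Fin m, |x i|) = t := by
        have h : ∀ i : Fin m, |x i| = t := fun i => by
          show |(-t : ℝ)| = t
          rw [abs_neg, abs_of_pos htpos]
        calc (⨆ i : Fin m, |x i|) = ⨆ _ : Fin m, t := by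
              exact iSup_congr h
          _ = t := ciSup_const
      rw [this]; exact ht1
    · rw [hxinner, abs_of_pos (lt_min one_pos hSpos)]
      exact min_le_left _ _
  have hmem : min 1 S ∈ {r : ℝ | ∃ x, q x ≤ 1 ∧ r = |⟪η, x⟫|} := by
    exact ⟨x, hqx, by rw [hxinner, abs_of_pos (lt_min one_pos hSpos)]⟩
  refine le_antisymm (csSup_le ⟨_, hmem⟩ hub) (le_csSup ⟨min 1 S, hub⟩ hmem)
end
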